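/- Let μ ∈ [0,1), m_0 = 0, m_{p+1} = μ·m_p + g_p. Then for every P ≥ 1, Σ_{p=0}^{P-1} ‖m_{p+1}‖² ≤ (1/(1-μ)²) · Σ_{p=0}^{P-1} ‖g_p‖². -/

import Mathlib

lemma mom_step (μ a b : ℝ) (hμ0 : 0 ≤ μ) (hμ1 : μ < 1) (ha : 0 ≤ a) (hb : 0 ≤ b) :
    (μ * a + b) ^ 2 ≤ μ * a ^ 2 + b ^ 2 / (1 - μ) := by
  have h1 : 0 < 1 - μ := by linarith
  have hc : b ^ 2 / (1 - μ) * (1 - μ) = b ^ 2 := div_mul_cancel₀ _ h1.ne'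
  nlinarith [mul_nonneg hμ0 (sq_nonneg ((1 - μ) * a - b)), hc, h1]

/-- Cumulative squared-norm bound for the momentum buffer:
    Σ_{p<P} ‖m_{p+1}‖² ≤ (1/(1-μ)²) Σ_{p<P} ‖g_p‖². -/
theorem momentum_cumulative_bound {d : ℕ} (μ : ℝ) (hμ : μ ∈ Set.Ico (0:ℝ) 1)
    (m g : ℕ → EuclideanSpace ℝ (Fin d))
    (h0 : m 0 = 0) (hrec : ∀ p, m (p + 1) = μ • m p + g p) :
    ∀ P : ℕ, 1 ≤ P →
      ∑ p ∈ Finset.range P, ‖m (p + 1)‖ ^ 2 ≤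
        (1 / (1 - μ) ^ 2) * ∑ p ∈ Finset.range P, ‖g p‖ ^ 2 := by
  obtain ⟨hμ0, hμ1⟩ := hμ
  have h1 : 0 < 1 - μ := by linarith
  intro P hP
  obtain ⟨n, rfl⟩ : ∃ n, P = n + 1 := ⟨P - 1, (Nat.succ_pred_eq_of_pos hP).symm⟩
  set S := ∑ p ∈ Finset.range (n + 1), ‖m (p + 1)‖ ^ 2 with hS
  set G := ∑ p ∈ Finset.range (n + 1), ‖g p‖ ^ 2 with hG
  -- pointwise bound
  have key : ∀ p, ‖m (p + 1)‖ ^ 2 ≤ μ * ‖m p‖ ^ 2 + ‖g p‖ ^ 2 / (1 - μ) := by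
    intro p
    have hn : ‖m (p + 1)‖ ≤ μ * ‖m p‖ + ‖g p‖ := by
      rw [hrec p]
      calc ‖μ • m p + g p‖ ≤ ‖μ • m p‖ + ‖g p‖ := norm_add_le _ _
        _ = μ * ‖m p‖ + ‖g p‖ := by rw [norm_smul, Real.norm_eq_abs, abs_of_nonneg hμ0]
    have := mom_step μ ‖m p‖ ‖g p‖ hμ0 hμ1 (norm_nonneg _) (norm_nonneg _)
    have hsq : ‖m (p + 1)‖ ^ 2 ≤ (μ * ‖m p‖ + ‖g p‖) ^ 2 := by
      apply pow_le_pow_left₀ (norm_nonneg _) hn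
    linarith
  -- sum the pointwise bound
  have hsum : S ≤ μ * (∑ p ∈ Finset.range (n + 1), ‖m p‖ ^ 2) + G / (1 - μ) := by
    rw [hS, hG, Finset.mul_sum, Finset.sum_div, ← Finset.sum_add_distrib]
    exact Finset.sum_le_sum fun p _ => key p
  -- shift the sum of ‖m p‖²
  have hshift : ∑ p ∈ Finset.range (n + 1), ‖m p‖ ^ 2 ≤ S := by
    rw [Finset.sum_range_succ' (fun p => ‖m p‖ ^ 2) n, h0]
    simp only [norm_zero]
    have : (0:ℝ) ^ 2 + ∑ p ∈ Finset.range n, ‖m (p + 1)‖ ^ 2 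
        = ∑ p ∈ Finset.range n, ‖m (p + 1)‖ ^ 2 := by ring_nf
    calc ∑ i ∈ Finset.range n, ‖m (i + 1)‖ ^ 2 + (0:ℝ) ^ 2 
        = ∑ i ∈ Finset.range n, ‖m (i + 1)‖ ^ 2 := by ring
      _ ≤ S := Finset.sum_le_sum_of_subset_of_nonneg 
            (Finset.range_subset_range.mpr (Nat.le_succ n)) 
            (fun i _ _ => sq_nonneg _)
  have hS' : S ≤ μ * S + G / (1 - μ) := by
    have := mul_le_mul_of_nonneg_left hshift hμ0
    linarith
  have hGnn : 0 ≤ G := Finset.sum_nonneg fun p _ => sq_nonneg _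
  rw [div_mul_eq_mul_div, one_mul, le_div_iff₀ (by positivity)]
  have hc : G / (1 - μ) * (1 - μ) = G := div_mul_cancel₀ _ h1.ne'
  nlinarith [mul_le_mul_of_nonneg_right hS' h1.le, hc]
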